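/- arXiv:1112.1275 — 4 statements merged into one kernel-verified Lean document; each statement's English description precedes it below -/
import Mathlib

section
/- The negative entropy prox-function d(x) = ln(n) + Σ_{i=1}^n x_i ln(x_i) is strongly convex with modulus 1 with respect to the ℓ1-norm on the standard simplex Δ_n = {x ∈ ℝ^n : x ≥ 0, Σ_i x_i = 1}; that is, for all x, y ∈ Δ_n and t ∈ [0,1], d(tx + (1-t)y) ≤ t·d(x) + (1-t)·d(y) - (1/2)·t·(1-t)·‖x - y‖_1². -/
open Real Finset Set

noncomputable def Gfun (r : ℝ) : ℝ := r * Real.log r - r + 1 - 3*(r-1)^2/(2*(r+2))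
noncomputable def Gfun' (r : ℝ) : ℝ := Real.log r - 3*(r-1)*(r+5)/(2*(r+2)^2)

lemma hasDerivAt_Gfun {r : ℝ} (hr : 0 < r) : HasDerivAt Gfun (Gfun' r) r := by
  have hr2 : (0:ℝ) < r + 2 := by linarith
  have hden : (2*(r+2)) ≠ 0 := by positivity
  have h1 := Real.hasDerivAt_mul_log hr.ne'
  have hq : HasDerivAt (fun r : ℝ => 3*(r-1)^2/(2*(r+2)))
      ((6*(r-1)*(2*(r+2)) - 3*(r-1)^2*2)/(2*(r+2))^2) r := by
    have hnum : HasDerivAt (fun r : ℝ => 3*(r-1)^2) (3*(2*(r-1))) r := by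
      simpa using (((hasDerivAt_id r).sub_const 1).pow 2).const_mul 3
    have hden' : HasDerivAt (fun r : ℝ => 2*(r+2)) 2 r := by
      simpa using ((hasDerivAt_id r).add_const 2).const_mul 2
    have := hnum.div hden' hden
    exact this.congr_deriv (by ring)
  have h := ((h1.sub (hasDerivAt_id r)).add_const 1).sub hq
  have : Gfun = fun r => (r * Real.log r - r + 1) - 3*(r-1)^2/(2*(r+2)) := rfl
  rw [this]
  refine h.congr_deriv ?_
  unfold Gfun'
  have : ((2:ℝ)*(r+2))^2 ≠ 0 := by positivity
  field_simp
  ring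

lemma hasDerivAt_Gfun' {r : ℝ} (hr : 0 < r) :
    HasDerivAt Gfun' (1/r - 27/(r+2)^3) r := by
  have hr2 : (0:ℝ) < r + 2 := by linarith
  have hden : (2*(r+2)^2) ≠ 0 := by positivity
  have h1 := Real.hasDerivAt_log hr.ne'
  have hq : HasDerivAt (fun r : ℝ => 3*(r-1)*(r+5)/(2*(r+2)^2))
      (((3*(r+5)+3*(r-1))*(2*(r+2)^2) - 3*(r-1)*(r+5)*(2*(2*(r+2))))/(2*(r+2)^2)^2) r := by
    have hnum : HasDerivAt (fun r : ℝ => 3*(r-1)*(r+5)) (3*(r+5)+3*(r-1)) r := by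
      have a : HasDerivAt (fun r : ℝ => 3*(r-1)) 3 r := by
        simpa using ((hasDerivAt_id r).sub_const 1).const_mul 3
      have b : HasDerivAt (fun r : ℝ => r+5) 1 r := (hasDerivAt_id r).add_const 5
      have := a.mul b
      exact this.congr_deriv (by ring)
    have hden' : HasDerivAt (fun r : ℝ => 2*(r+2)^2) (2*(2*(r+2))) r := by
      simpa using (((hasDerivAt_id r).add_const 2).pow 2).const_mul 2
    exact hnum.div hden' hden
  have h := h1.sub hq
  have he : Gfun' = fun r => Real.log r - 3*(r-1)*(r+5)/(2*(r+2)^2) := rfl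
  rw [he]
  refine h.congr_deriv ?_
  have h3 : (r+2)^3 ≠ 0 := by positivity
  field_simp
  ring

lemma Gfun'_mono : MonotoneOn Gfun' (Set.Ioi (0:ℝ)) := by
  apply monotoneOn_of_hasDerivWithinAt_nonneg (convex_Ioi 0)
    (f' := fun r => 1/r - 27/(r+2)^3)
  · intro r hr
    exact (hasDerivAt_Gfun' hr).continuousAt.continuousWithinAt
  · intro r hr
    rw [interior_Ioi] at hr
    exact (hasDerivAt_Gfun' hr).hasDerivWithinAt
  · intro r hr
    rw [interior_Ioi] at hr
    have hr : (0:ℝ) < r := hr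
    have hr2 : (0:ℝ) < (r+2)^3 := by positivity
    rw [sub_nonneg, div_le_div_iff₀ hr2 hr]
    nlinarith [sq_nonneg (r-1), hr.le]

lemma Gfun'_one : Gfun' 1 = 0 := by simp [Gfun']

lemma Gfun_one : Gfun 1 = 0 := by norm_num [Gfun]

lemma Gfun_nonneg {r : ℝ} (hr : 0 ≤ r) : 0 ≤ Gfun r := by
  rcases le_or_gt r 1 with h1 | h1
  · -- antitone on [0,1]
    have hcont : ContinuousOn Gfun (Set.Icc (0:ℝ) 1) := by
      apply ContinuousOn.sub
      · apply ContinuousOn.add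
        · exact (Real.continuous_mul_log.sub continuous_id).continuousOn
        · exact continuousOn_const
      · apply ContinuousOn.div
        · fun_prop
        · fun_prop
        · intro s hs; have := hs.1; intro hc; nlinarith [hc]
    have hanti : AntitoneOn Gfun (Set.Icc (0:ℝ) 1) := by
      apply antitoneOn_of_hasDerivWithinAt_nonpos (convex_Icc 0 1) hcont (f' := Gfun')
      · intro s hs
        rw [interior_Icc] at hs
        exact (hasDerivAt_Gfun hs.1).hasDerivWithinAt
      · intro s hs
        rw [interior_Icc] at hs
        have := Gfun'_mono (Set.mem_Ioi.mpr hs.1) (Set.mem_Ioi.mpr one_pos) hs.2.le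
        rw [Gfun'_one] at this
        exact this
    have := hanti ⟨hr, h1⟩ ⟨zero_le_one, le_refl 1⟩ h1
    rwa [Gfun_one] at this
  · have hmono : MonotoneOn Gfun (Set.Ici (1:ℝ)) := by
      apply monotoneOn_of_hasDerivWithinAt_nonneg (convex_Ici 1) (f' := Gfun')
      · intro s hs
        have : (0:ℝ) < s := lt_of_lt_of_le one_pos hs
        exact (hasDerivAt_Gfun this).continuousAt.continuousWithinAt
      · intro s hs
        rw [interior_Ici] at hs
        exact (hasDerivAt_Gfun (lt_trans one_pos hs)).hasDerivWithinAt
      · intro s hs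
        rw [interior_Ici] at hs
        have := Gfun'_mono (Set.mem_Ioi.mpr one_pos) (Set.mem_Ioi.mpr (lt_trans one_pos hs)) hs.le
        rw [Gfun'_one] at this
        exact this
    have := hmono (Set.mem_Ici.mpr le_rfl) (Set.mem_Ici.mpr h1.le) h1.le
    rwa [Gfun_one] at this

/-- Pointwise refined Pinsker bound: for `p ≥ 0`, `q > 0`,
`p log p - p log q - p + q ≥ 3(p-q)²/(2(p+2q))`. -/
lemma pointwise_kl {p q : ℝ} (hp : 0 ≤ p) (hq : 0 < q) :
    3*(p-q)^2/(2*(p+2*q)) ≤ p * Real.log p - p * Real.log q - p + q := by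
  rcases eq_or_lt_of_le hp with h0 | h0
  · rw [← h0, div_le_iff₀ (show (0:ℝ) < 2*(0+2*q) by linarith)]
    nlinarith [sq_nonneg q]
  · have key : (0:ℝ) ≤ (p * Real.log p - p * Real.log q - p + q
        - 3*(p-q)^2/(2*(p+2*q))) / q := by
      calc (0:ℝ) ≤ Gfun (p/q) := Gfun_nonneg (div_pos h0 hq).le
        _ = (p * Real.log p - p * Real.log q - p + q - 3*(p-q)^2/(2*(p+2*q))) / q := by
            unfold Gfun
            rw [Real.log_div h0.ne' hq.ne']
            have hpq : (0:ℝ) < p + 2*q := by linarith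
            field_simp
    have h2 := mul_nonneg key hq.le
    rw [div_mul_cancel₀ _ hq.ne'] at h2
    linarith

lemma engel_sum {n : ℕ} (p q : Fin n → ℝ)
    (hp0 : ∀ i, 0 ≤ p i) (hq0 : ∀ i, 0 ≤ q i)
    (hp1 : ∑ i, p i = 1) (hq1 : ∑ i, q i = 1) :
    (1/2) * (∑ i, |p i - q i|)^2 ≤ ∑ i, 3*(p i - q i)^2/(2*(p i + 2*q i)) := by
  classical
  set s : Finset (Fin n) := Finset.univ.filter (fun i => 0 < p i + 2*q i) with hs
  have hmem : ∀ i, i ∉ s → p i = 0 ∧ q i = 0 := by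
    intro i hi
    simp only [hs, Finset.mem_filter, Finset.mem_univ, true_and, not_lt] at hi
    constructor <;> nlinarith [hp0 i, hq0 i]
  have h1 : ∑ i, |p i - q i| = ∑ i ∈ s, |p i - q i| := by
    rw [← Finset.sum_subset (Finset.subset_univ s)]
    intro i _ hi
    rcases hmem i hi with ⟨h1, h2⟩
    rw [h1, h2]; simp
  have h2 : ∑ i, 3*(p i - q i)^2/(2*(p i + 2*q i)) =
      ∑ i ∈ s, 3*(p i - q i)^2/(2*(p i + 2*q i)) := by
    rw [← Finset.sum_subset (Finset.subset_univ s)]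
    intro i _ hi
    rcases hmem i hi with ⟨h1, h2⟩
    rw [h1, h2]; simp
  rw [h1, h2]
  rcases s.eq_empty_or_nonempty with he | hne
  · simp [he]
  · have hgpos : ∀ i ∈ s, 0 < p i + 2*q i := by
      intro i hi
      simp only [hs, Finset.mem_filter, Finset.mem_univ, true_and] at hi
      exact hi
    have hT : 0 < ∑ i ∈ s, (p i + 2*q i) :=
      Finset.sum_pos hgpos hne
    have hT3 : ∑ i ∈ s, (p i + 2*q i) ≤ 3 := by
      have : ∑ i ∈ s, (p i + 2*q i) ≤ ∑ i, (p i + 2*q i) := by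
        apply Finset.sum_le_sum_of_subset_of_nonneg (Finset.subset_univ s)
        intro i _ _
        nlinarith [hp0 i, hq0 i]
      have h3 : ∑ i, (p i + 2*q i) = 3 := by
        rw [Finset.sum_add_distrib, ← Finset.mul_sum, hp1, hq1]; ring
      linarith
    have hcs := Finset.sq_sum_div_le_sum_sq_div s (fun i => |p i - q i|)
      (g := fun i => p i + 2*q i) hgpos
    have hA : (0:ℝ) ≤ (∑ i ∈ s, |p i - q i|)^2 := sq_nonneg _
    have hstep : (∑ i ∈ s, |p i - q i|)^2 / 3 ≤
        (∑ i ∈ s, |p i - q i|)^2 / ∑ i ∈ s, (p i + 2*q i) := by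
      exact div_le_div_of_nonneg_left hA hT hT3
    have hrw : ∑ i ∈ s, 3*(p i - q i)^2/(2*(p i + 2*q i)) =
        (3/2) * ∑ i ∈ s, |p i - q i|^2 / (p i + 2*q i) := by
      rw [Finset.mul_sum]
      apply Finset.sum_congr rfl
      intro i hi
      rw [sq_abs]
      field_simp
    rw [hrw]
    calc (1/2) * (∑ i ∈ s, |p i - q i|)^2
        = (3/2) * ((∑ i ∈ s, |p i - q i|)^2 / 3) := by ring
      _ ≤ (3/2) * ((∑ i ∈ s, |p i - q i|)^2 / ∑ i ∈ s, (p i + 2*q i)) := by linarith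
      _ ≤ (3/2) * ∑ i ∈ s, |p i - q i|^2 / (p i + 2*q i) := by
          have := hcs
          linarith

/-- The negative entropy prox-function `d(x) = ln n + ∑ x_i ln x_i` is strongly convex
with modulus 1 w.r.t. the ℓ1-norm on the standard simplex. -/
theorem entropy_strongly_convex_l1 (n : ℕ) (hn : 1 ≤ n)
    (d : (Fin n → ℝ) → ℝ)
    (hd : ∀ x, d x = Real.log n + ∑ i, x i * Real.log (x i))
    (x y : Fin n → ℝ)
    (hx : x ∈ stdSimplex ℝ (Fin n)) (hy : y ∈ stdSimplex ℝ (Fin n))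
    (t : ℝ) (ht0 : 0 ≤ t) (ht1 : t ≤ 1) :
    d (t • x + (1 - t) • y) ≤
      t * d x + (1 - t) * d y - (1 / 2) * t * (1 - t) * (∑ i, |x i - y i|) ^ 2 := by
  rcases eq_or_lt_of_le ht0 with h0 | h0
  · rw [← h0]
    norm_num
  rcases eq_or_lt_of_le ht1 with h1 | h1
  · rw [h1]
    norm_num
  -- now 0 < t < 1
  set z : Fin n → ℝ := t • x + (1 - t) • y with hzdef
  have hzi : ∀ i, z i = t * x i + (1 - t) * y i := by
    intro i; simp [hzdef]
  have hz : z ∈ stdSimplex ℝ (Fin n) :=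
    (convex_stdSimplex ℝ (Fin n)) hx hy ht0 (by linarith) (by ring)
  set S : ℝ := ∑ i, |x i - y i| with hS
  -- pointwise inequality
  have hpoint : ∀ i : Fin n,
      t * (3*(x i - z i)^2/(2*(x i + 2*z i))) + (1-t) * (3*(y i - z i)^2/(2*(y i + 2*z i)))
        ≤ t * (x i * Real.log (x i)) + (1-t) * (y i * Real.log (y i)) - z i * Real.log (z i) := by
    intro i
    rcases eq_or_lt_of_le (hz.1 i) with hz0 | hz0
    · -- z i = 0, hence x i = y i = 0
      have hxi : x i = 0 := by nlinarith [hx.1 i, hy.1 i, hzi i, h0, h1]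
      have hyi : y i = 0 := by nlinarith [hx.1 i, hy.1 i, hzi i, h0, h1]
      rw [hxi, hyi, ← hz0]
      simp
    · have hklx := pointwise_kl (hx.1 i) hz0
      have hkly := pointwise_kl (hy.1 i) hz0
      have hident : t * (x i * Real.log (x i) - x i * Real.log (z i) - x i + z i)
          + (1-t) * (y i * Real.log (y i) - y i * Real.log (z i) - y i + z i)
          = t * (x i * Real.log (x i)) + (1-t) * (y i * Real.log (y i))
            - z i * Real.log (z i) := by
        rw [hzi i]; ring
      nlinarith [hklx, hkly, h0, h1]
  -- sum the pointwise inequalities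
  have hsum := Finset.sum_le_sum (fun i (_ : i ∈ Finset.univ) => hpoint i)
  rw [Finset.sum_sub_distrib, Finset.sum_add_distrib, ← Finset.mul_sum, ← Finset.mul_sum,
    Finset.sum_add_distrib, ← Finset.mul_sum, ← Finset.mul_sum] at hsum
  -- Engel / Cauchy-Schwarz bounds
  have hex := engel_sum x z hx.1 hz.1 hx.2 hz.2
  have hey := engel_sum y z hy.1 hz.1 hy.2 hz.2
  have hxz : ∑ i, |x i - z i| = (1-t) * S := by
    rw [hS, Finset.mul_sum]
    apply Finset.sum_congr rfl
    intro i _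
    rw [hzi i, show x i - (t * x i + (1-t) * y i) = (1-t) * (x i - y i) by ring,
      abs_mul, abs_of_nonneg (by linarith : (0:ℝ) ≤ 1-t)]
  have hyz : ∑ i, |y i - z i| = t * S := by
    rw [hS, Finset.mul_sum]
    apply Finset.sum_congr rfl
    intro i _
    rw [hzi i, show y i - (t * x i + (1-t) * y i) = -(t * (x i - y i)) by ring,
      abs_neg, abs_mul, abs_of_nonneg ht0]
  rw [hxz] at hex
  rw [hyz] at hey
  -- conclude
  have hfin : (1/2) * t * (1-t) * S^2
      ≤ t * ∑ i, (3*(x i - z i)^2/(2*(x i + 2*z i)))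
        + (1-t) * ∑ i, (3*(y i - z i)^2/(2*(y i + 2*z i))) := by
    nlinarith [hex, hey, h0, h1, sq_nonneg S]
  rw [show d (t • x + (1 - t) • y) = d z from rfl, hd x, hd y, hd z]
  linarith [hsum, hfin]
end

section
/- For any sequence of loss vectors g_0, ..., g_{T-1} ∈ ℝ^n, any positive weights λ_0, ..., λ_{T-1}, any x_0,...,x_{T-1} ∈ Q, and any D ≥ 0, the scaled regret satisfies: (1/Σ_{k<T} λ_k) · max{ Σ_{t<T} λ_t ⟨g_t, x_t - x⟩ : x ∈ Q, d(x) ≤ D } ≤ (1/Σ_{k<T} λ_k) · ( β_T D + (1/2) Σ_{t<T} (λ_t²/β_t) ‖g_t‖_*² ), where the iterates are generated by the Dual Averaging method: s_0 = 0, x_0 = argmin_{x∈Q} d(x), s_{t+1} = s_t - λ_t g_t, x_{t+1} = argmax_{x∈Q} { ⟨s_{t+1}, x - x_0⟩ - β_{t+1} d(x) }, with β_0 ≤ β_1 ≤ ... a positive non-decreasing sequence. -/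
open Finset

lemma aux_limit (a b c : ℝ) (hc : 0 ≤ c)
    (h : ∀ t : ℝ, 0 < t → t ≤ 1 → a ≤ b + c * t) : a ≤ b := by
  refine le_of_forall_pos_le_add fun ε hε => ?_
  have hc1 : 0 < c + 1 := by linarith
  have ht0 : 0 < min 1 (ε / (c + 1)) := lt_min one_pos (by positivity)
  have h1 := h _ ht0 (min_le_left _ _)
  have h2 : c * min 1 (ε / (c + 1)) ≤ ε := by
    calc c * min 1 (ε / (c + 1)) ≤ c * (ε / (c + 1)) :=
          mul_le_mul_of_nonneg_left (min_le_right _ _) hc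
      _ ≤ (c + 1) * (ε / (c + 1)) :=
          mul_le_mul_of_nonneg_right (by linarith) (by positivity)
      _ = ε := by field_simp
  linarith

-- dual norm facts
lemma dual_norm_facts (n : ℕ) (N Ns : (Fin n → ℝ) → ℝ)
    (hN0 : ∀ v, N v = 0 ↔ v = 0)
    (hNsmul : ∀ (c : ℝ) v, N (c • v) = |c| * N v)
    (hNadd : ∀ v w, N (v + w) ≤ N v + N w)
    (hNs : ∀ s, Ns s = sSup {r : ℝ | ∃ v, N v ≤ 1 ∧ r = ∑ i, s i * v i}) :
    (∀ u, 0 ≤ Ns u) ∧ (∀ u w, (∑ i, u i * w i) ≤ Ns u * N w) := by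
  have hN0' : N 0 = 0 := (hN0 0).mpr rfl
  have hNneg : ∀ v, N (-v) = N v := by
    intro v
    have := hNsmul (-1) v
    simpa using this
  have hNnonneg : ∀ v, 0 ≤ N v := by
    intro v
    have h1 := hNadd v (-v)
    rw [add_neg_cancel, hN0', hNneg] at h1
    linarith
  rcases Nat.eq_zero_or_pos n with hn | hn
  · subst hn
    have hset : ∀ u : Fin 0 → ℝ, {r : ℝ | ∃ v, N v ≤ 1 ∧ r = ∑ i, u i * v i} = {0} := by
      intro u
      ext r
      simp only [Set.mem_setOf_eq, Set.mem_singleton_iff]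
      constructor
      · rintro ⟨v, _, rfl⟩; simp
      · rintro rfl; exact ⟨0, by rw [hN0']; norm_num, by simp⟩
    have hNs0 : ∀ u, Ns u = 0 := by
      intro u; rw [hNs, hset, csSup_singleton]
    constructor
    · intro u; rw [hNs0]
    · intro u w; rw [hNs0]; simp
  · -- n ≥ 1
    set e : Fin n → (Fin n → ℝ) := fun i => Pi.single i 1 with he
    have hdecomp : ∀ v : Fin n → ℝ, v = ∑ i, v i • e i := by
      intro v
      ext j
      simp [he, Finset.sum_apply, Pi.single_apply]
    set C := ∑ i, N (e i) with hC
    have hCnonneg : 0 ≤ C := sum_nonneg fun i _ => hNnonneg _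
    have hNle : ∀ v, N v ≤ C * ‖v‖ := by
      intro v
      calc N v = N (∑ i, v i • e i) := by rw [← hdecomp]
        _ ≤ ∑ i, N (v i • e i) :=
            Finset.le_sum_of_subadditive N hN0'.le hNadd _ _
        _ = ∑ i, |v i| * N (e i) := by simp [hNsmul]
        _ ≤ ∑ i, ‖v‖ * N (e i) :=
            sum_le_sum fun i _ => mul_le_mul_of_nonneg_right
              (by simpa [Real.norm_eq_abs] using norm_le_pi_norm v i) (hNnonneg _)
        _ = C * ‖v‖ := by rw [← Finset.mul_sum, mul_comm]
    have hNcont : Continuous N := by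
      have hlip : LipschitzWith (Real.toNNReal C) N := by
        apply LipschitzWith.of_dist_le_mul
        intro v w
        rw [Real.dist_eq, dist_eq_norm]
        have h1 : N v - N w ≤ N (v - w) := by
          have := hNadd (v - w) w; simp only [sub_add_cancel] at this; linarith
        have h2 : N w - N v ≤ N (v - w) := by
          have := hNadd (w - v) v
          simp only [sub_add_cancel] at this
          have h3 : N (w - v) = N (v - w) := by rw [← hNneg (v - w), neg_sub]
          linarith
        have habs : |N v - N w| ≤ N (v - w) := abs_sub_le_iff.mpr ⟨h1, h2⟩
        calc |N v - N w| ≤ C * ‖v - w‖ := le_trans habs (hNle _)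
          _ = Real.toNNReal C * ‖v - w‖ := by rw [Real.coe_toNNReal C hCnonneg]
      exact hlip.continuous
    haveI : Nontrivial (Fin n → ℝ) := by
      refine ⟨0, Pi.single ⟨0, hn⟩ 1, fun h => ?_⟩
      have := congrFun h ⟨0, hn⟩
      simp [Pi.single_apply] at this
    obtain ⟨v₀, hv₀s, hv₀min'⟩ := (isCompact_sphere (0 : Fin n → ℝ) 1).exists_isMinOn
      (NormedSpace.sphere_nonempty.mpr zero_le_one) hNcont.continuousOn
    have hv₀min := isMinOn_iff.mp hv₀min'
    have hv₀ : ‖v₀‖ = 1 := by simpa using hv₀s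
    set m := N v₀ with hm'
    have hm : 0 < m := by
      rcases lt_or_eq_of_le (hNnonneg v₀) with h | h
      · exact h
      · exfalso
        have : v₀ = 0 := (hN0 v₀).mp h.symm
        rw [this] at hv₀; simp at hv₀
    have hlow : ∀ v, m * ‖v‖ ≤ N v := by
      intro v
      rcases eq_or_ne v 0 with rfl | hv
      · simp [hN0']
      · have hnv : 0 < ‖v‖ := norm_pos_iff.mpr hv
        have hu : ‖(‖v‖⁻¹ • v)‖ = 1 := by
          rw [norm_smul, norm_inv, norm_norm, inv_mul_cancel₀ hnv.ne']
        have hmin := hv₀min _ (by simpa using hu)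
        rw [hNsmul, abs_of_nonneg (inv_nonneg.mpr hnv.le)] at hmin
        calc m * ‖v‖ ≤ (‖v‖⁻¹ * N v) * ‖v‖ := mul_le_mul_of_nonneg_right hmin hnv.le
          _ = N v := by field_simp
    have hbdd : ∀ u : Fin n → ℝ, BddAbove {r : ℝ | ∃ v, N v ≤ 1 ∧ r = ∑ i, u i * v i} := by
      intro u
      refine ⟨(∑ i, |u i|) * m⁻¹, ?_⟩
      rintro r ⟨v, hv1, rfl⟩
      have hvn : ‖v‖ ≤ m⁻¹ := by
        rw [← one_div]
        rw [le_div_iff₀ hm, mul_comm]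
        exact le_trans (hlow v) hv1
      calc ∑ i, u i * v i ≤ ∑ i, |u i| * ‖v‖ := by
            refine sum_le_sum fun i _ => ?_
            calc u i * v i ≤ |u i * v i| := le_abs_self _
              _ = |u i| * |v i| := abs_mul _ _
              _ ≤ |u i| * ‖v‖ := mul_le_mul_of_nonneg_left
                  (by simpa [Real.norm_eq_abs] using norm_le_pi_norm v i) (abs_nonneg _)
        _ = (∑ i, |u i|) * ‖v‖ := by rw [Finset.sum_mul]
        _ ≤ (∑ i, |u i|) * m⁻¹ :=
            mul_le_mul_of_nonneg_left hvn (sum_nonneg fun i _ => abs_nonneg _)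
    have hNsnonneg : ∀ u, 0 ≤ Ns u := by
      intro u
      rw [hNs]
      exact le_csSup (hbdd u) ⟨0, by simp [hN0'], by simp⟩
    refine ⟨hNsnonneg, fun u w => ?_⟩
    rcases eq_or_ne w 0 with rfl | hw
    · simp [hN0']
    · have hNw : 0 < N w := by
        rcases lt_or_eq_of_le (hNnonneg w) with h | h
        · exact h
        · exact absurd ((hN0 w).mp h.symm) hw
      have hmem : ((N w)⁻¹ * ∑ i, u i * w i) ∈
          {r : ℝ | ∃ v, N v ≤ 1 ∧ r = ∑ i, u i * v i} := by
        refine ⟨(N w)⁻¹ • w, ?_, ?_⟩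
        · rw [hNsmul, abs_of_nonneg (inv_nonneg.mpr hNw.le), inv_mul_cancel₀ hNw.ne']
        · rw [Finset.mul_sum]
          refine Finset.sum_congr rfl fun i _ => ?_
          simp only [Pi.smul_apply, smul_eq_mul]
          ring
      have hle := le_csSup (hbdd u) hmem
      rw [← hNs] at hle
      rw [inv_mul_le_iff₀ hNw] at hle
      linarith [hle]
/-- Nesterov's regret bound for Dual Averaging schemes (first part of Theorem 1 in
"Primal-dual subgradient methods"). `N` is a norm on ℝⁿ, `Ns` its dual norm, `d` a
prox-function on the closed convex set `Q`, strongly convex with modulus 1 w.r.t. `N`,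
vanishing at its minimizer `x 0`.  The iterates accumulate the weighted losses in the
dual variable `s` and project back via the parametrized mirror operator. -/
theorem dual_averaging_regret_bound (n T : ℕ) (hT : 1 ≤ T)
    (Q : Set (Fin n → ℝ)) (hQclosed : IsClosed Q) (hQconv : Convex ℝ Q)
    -- a norm `N` on ℝⁿ and its dual norm `Ns`
    (N Ns : (Fin n → ℝ) → ℝ)
    (hN0 : ∀ v, N v = 0 ↔ v = 0)
    (hNsmul : ∀ (c : ℝ) v, N (c • v) = |c| * N v)
    (hNadd : ∀ v w, N (v + w) ≤ N v + N w)
    (hNs : ∀ s, Ns s = sSup {r : ℝ | ∃ v, N v ≤ 1 ∧ r = ∑ i, s i * v i})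
    -- the prox-function: continuous and strongly convex modulus 1 w.r.t. `N` on `Q`
    (d : (Fin n → ℝ) → ℝ) (hdcont : ContinuousOn d Q)
    (hdstrong : ∀ x ∈ Q, ∀ y ∈ Q, ∀ t : ℝ, 0 ≤ t → t ≤ 1 →
      d (t • x + (1 - t) • y) ≤ t * d x + (1 - t) * d y
        - (1 / 2) * t * (1 - t) * N (x - y) ^ 2)
    -- weights and projection parameters
    (lam beta : ℕ → ℝ) (hlam : ∀ t, 0 < lam t) (hbeta : ∀ t, 0 < beta t)
    (hbetamono : Monotone beta)
    -- the loss vectors returned by the oracle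
    (g : ℕ → Fin n → ℝ)
    -- the dual variables
    (s : ℕ → Fin n → ℝ) (hs0 : s 0 = 0)
    (hsrec : ∀ t, s (t + 1) = s t - lam t • g t)
    -- the iterates
    (x : ℕ → Fin n → ℝ)
    (hx0Q : x 0 ∈ Q) (hx0min : ∀ y ∈ Q, d (x 0) ≤ d y) (hdx0 : d (x 0) = 0)
    (hxQ : ∀ t, x (t + 1) ∈ Q)
    (hxmax : ∀ t, ∀ y ∈ Q,
      (∑ i, s (t + 1) i * (y i - x 0 i)) - beta (t + 1) * d y ≤
      (∑ i, s (t + 1) i * (x (t + 1) i - x 0 i)) - beta (t + 1) * d (x (t + 1))) :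
    ∀ D : ℝ, 0 ≤ D → ∀ z ∈ Q, d z ≤ D →
      (1 / ∑ k ∈ Finset.range T, lam k) *
          (∑ t ∈ Finset.range T, lam t * ∑ i, g t i * (x t i - z i)) ≤
      (1 / ∑ k ∈ Finset.range T, lam k) *
          (beta T * D + (1 / 2) * ∑ t ∈ Finset.range T, lam t ^ 2 / beta t * Ns (g t) ^ 2) := by
  intro D hD z hzQ hzD
  obtain ⟨hNsnonneg, hCS⟩ := dual_norm_facts n N Ns hN0 hNsmul hNadd hNs
  have hN0' : N 0 = 0 := (hN0 0).mpr rfl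
  have hNneg : ∀ v, N (-v) = N v := by
    intro v; have := hNsmul (-1) v; simpa using this
  have hNnonneg : ∀ v, 0 ≤ N v := by
    intro v
    have h1 := hNadd v (-v)
    rw [add_neg_cancel, hN0', hNneg] at h1
    linarith
  have hd0 : ∀ y ∈ Q, 0 ≤ d y := fun y hy => hdx0 ▸ hx0min y hy
  -- every iterate is in Q
  have hxQ' : ∀ t, x t ∈ Q := by
    intro t
    cases t with
    | zero => exact hx0Q
    | succ t => exact hxQ t
  -- maximality at every time step (including t = 0)
  have hmax' : ∀ t, ∀ y ∈ Q,
      (∑ i, s t i * (y i - x 0 i)) - beta t * d y ≤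
      (∑ i, s t i * (x t i - x 0 i)) - beta t * d (x t) := by
    intro t y hy
    cases t with
    | zero =>
      have h1 : 0 ≤ d y := hd0 y hy
      have h2 := (hbeta 0).le
      simp only [hs0, Pi.zero_apply, zero_mul, Finset.sum_const_zero, hdx0, mul_zero]
      nlinarith
    | succ t => exact hxmax t y hy
  -- optimality gap: if xs maximizes the strongly concave objective, we get a quadratic gap
  have hopt : ∀ (c : Fin n → ℝ) (β : ℝ), 0 < β → ∀ xs ∈ Q,
      (∀ y ∈ Q, (∑ i, c i * (y i - x 0 i)) - β * d y ≤
        (∑ i, c i * (xs i - x 0 i)) - β * d xs) →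
      ∀ y ∈ Q, ((∑ i, c i * (y i - x 0 i)) - β * d y) + β / 2 * N (y - xs) ^ 2 ≤
        (∑ i, c i * (xs i - x 0 i)) - β * d xs := by
    intro c β hβ xs hxs hmax y hy
    refine aux_limit _ _ (β / 2 * N (y - xs) ^ 2) (by positivity) ?_
    intro t ht0 ht1
    have hw : t • y + (1 - t) • xs ∈ Q :=
      hQconv hy hxs ht0.le (by linarith) (by ring)
    have h1 := hdstrong y hy xs hxs t ht0.le ht1
    have h2 := hmax _ hw
    have hlin : (∑ i, c i * ((t • y + (1 - t) • xs) i - x 0 i)) =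
        t * (∑ i, c i * (y i - x 0 i)) + (1 - t) * (∑ i, c i * (xs i - x 0 i)) := by
      rw [Finset.mul_sum, Finset.mul_sum, ← Finset.sum_add_distrib]
      refine Finset.sum_congr rfl fun i _ => ?_
      simp only [Pi.add_apply, Pi.smul_apply, smul_eq_mul]
      ring
    rw [hlin] at h2
    have hβd := mul_le_mul_of_nonneg_left h1 hβ.le
    have key : t * (((∑ i, c i * (y i - x 0 i)) - β * d y) + β / 2 * N (y - xs) ^ 2) ≤
        t * (((∑ i, c i * (xs i - x 0 i)) - β * d xs) + β / 2 * N (y - xs) ^ 2 * t) := by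
      nlinarith [h2, hβd]
    exact le_of_mul_le_mul_left key ht0
  -- the inner products with s telescoped
  have hsT : ∀ T', (∑ i, s T' i * (z i - x 0 i)) =
      -∑ t ∈ Finset.range T', lam t * ∑ i, g t i * (z i - x 0 i) := by
    intro T'
    induction T' with
    | zero => simp [hs0]
    | succ k ih =>
      have h1 : (∑ i, s (k + 1) i * (z i - x 0 i)) =
          (∑ i, s k i * (z i - x 0 i)) - lam k * ∑ i, g k i * (z i - x 0 i) := by
        rw [hsrec, Finset.mul_sum, ← Finset.sum_sub_distrib]
        refine Finset.sum_congr rfl fun i _ => ?_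
        simp only [Pi.sub_apply, Pi.smul_apply, smul_eq_mul]
        ring
      rw [h1, ih, Finset.sum_range_succ]
      ring
  -- the per-step descent estimate
  have hstep : ∀ t,
      ((∑ i, s (t + 1) i * (x (t + 1) i - x 0 i)) - beta (t + 1) * d (x (t + 1)))
        + lam t * (∑ i, g t i * (x t i - x 0 i)) ≤
      ((∑ i, s t i * (x t i - x 0 i)) - beta t * d (x t))
        + lam t ^ 2 / (2 * beta t) * Ns (g t) ^ 2 := by
    intro t
    have hgap := hopt (s t) (beta t) (hbeta t) (x t) (hxQ' t) (hmax' t) (x (t + 1)) (hxQ t)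
    have hsplit : (∑ i, s (t + 1) i * (x (t + 1) i - x 0 i)) =
        (∑ i, s t i * (x (t + 1) i - x 0 i)) - lam t * ∑ i, g t i * (x (t + 1) i - x 0 i) := by
      rw [hsrec, Finset.mul_sum, ← Finset.sum_sub_distrib]
      refine Finset.sum_congr rfl fun i _ => ?_
      simp only [Pi.sub_apply, Pi.smul_apply, smul_eq_mul]
      ring
    have hG : (∑ i, g t i * (x (t + 1) i - x 0 i)) + (∑ i, g t i * (x t i - x (t + 1) i)) =
        ∑ i, g t i * (x t i - x 0 i) := by
      rw [← Finset.sum_add_distrib]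
      exact Finset.sum_congr rfl fun i _ => by ring
    have hcs : (∑ i, g t i * (x t i - x (t + 1) i)) ≤
        Ns (g t) * N (x (t + 1) - x t) := by
      have h1 := hCS (g t) (x t - x (t + 1))
      have h2 : N (x t - x (t + 1)) = N (x (t + 1) - x t) := by
        rw [← hNneg (x (t + 1) - x t), neg_sub]
      have h3 : (∑ i, g t i * (x t - x (t + 1)) i) = ∑ i, g t i * (x t i - x (t + 1) i) :=
        Finset.sum_congr rfl fun i _ => by simp [Pi.sub_apply]
      rw [h3, h2] at h1
      exact h1
    have hbb : beta t * d (x (t + 1)) ≤ beta (t + 1) * d (x (t + 1)) :=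
      mul_le_mul_of_nonneg_right (hbetamono (Nat.le_succ t)) (hd0 _ (hxQ t))
    -- AM–GM step
    have hq : lam t ^ 2 / (2 * beta t) * (2 * beta t) = lam t ^ 2 :=
      div_mul_cancel₀ _ (by have := hbeta t; positivity)
    have hamgm : lam t * (Ns (g t) * N (x (t + 1) - x t)) ≤
        beta t / 2 * N (x (t + 1) - x t) ^ 2 + lam t ^ 2 / (2 * beta t) * Ns (g t) ^ 2 := by
      nlinarith [sq_nonneg (beta t * N (x (t + 1) - x t) - lam t * Ns (g t)), hbeta t, hq,
        mul_pos (hbeta t) (hbeta t)]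
    have hA : lam t * (∑ i, g t i * (x t i - x (t + 1) i)) ≤
        lam t * (Ns (g t) * N (x (t + 1) - x t)) :=
      mul_le_mul_of_nonneg_left hcs (hlam t).le
    have hG2 : lam t * (∑ i, g t i * (x (t + 1) i - x 0 i))
        + lam t * (∑ i, g t i * (x t i - x (t + 1) i))
        = lam t * (∑ i, g t i * (x t i - x 0 i)) := by
      rw [← mul_add, hG]
    linarith [hgap, hsplit, hG2, hbb, hamgm, hA]
  -- telescoping
  have htel : ∀ T',
      ((∑ i, s T' i * (x T' i - x 0 i)) - beta T' * d (x T'))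
        + ∑ t ∈ Finset.range T', lam t * (∑ i, g t i * (x t i - x 0 i)) ≤
      (1 / 2) * ∑ t ∈ Finset.range T', lam t ^ 2 / beta t * Ns (g t) ^ 2 := by
    intro T'
    induction T' with
    | zero => simp [hs0, hdx0]
    | succ k ih =>
      have h1 := hstep k
      have heq : lam k ^ 2 / (2 * beta k) = (1 / 2) * (lam k ^ 2 / beta k) := by
        have h := (hbeta k).ne'
        field_simp
      rw [Finset.sum_range_succ, Finset.sum_range_succ]
      rw [heq] at h1
      linarith
  -- final assembly
  have hL : 0 < ∑ k ∈ Finset.range T, lam k :=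
    Finset.sum_pos (fun k _ => hlam k) (Finset.nonempty_range_iff.mpr (by omega))
  apply mul_le_mul_of_nonneg_left _ (by positivity : (0:ℝ) ≤ 1 / ∑ k ∈ Finset.range T, lam k)
  have F1 : (∑ t ∈ Finset.range T, lam t * ∑ i, g t i * (x t i - z i)) =
      (∑ t ∈ Finset.range T, lam t * ∑ i, g t i * (x t i - x 0 i))
        - ∑ t ∈ Finset.range T, lam t * ∑ i, g t i * (z i - x 0 i) := by
    rw [← Finset.sum_sub_distrib]
    refine Finset.sum_congr rfl fun t _ => ?_
    have hper : (∑ i, g t i * (x t i - z i)) =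
        (∑ i, g t i * (x t i - x 0 i)) - ∑ i, g t i * (z i - x 0 i) := by
      rw [← Finset.sum_sub_distrib]
      exact Finset.sum_congr rfl fun i _ => by ring
    rw [hper]; ring
  have F2 := hsT T
  have F3 := hmax' T z hzQ
  have F4 := htel T
  have F5 : beta T * d z ≤ beta T * D := mul_le_mul_of_nonneg_left hzD (hbeta T).le
  linarith
end

section
/- Define the sequence β_0 = 1 and β_{t+1} = Σ_{k=0}^{t} 1/β_k for t ≥ 0. Then for all t ≥ 1, √(t-1) ≤ β_t ≤ (1/(1+√3)) + √(2t-1); in particular β_t is non-decreasing and β_T / T → 0 as T → ∞. -/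
set_option maxHeartbeats 1000000 in
lemma nesterov_aux_step (t x : ℝ) (ht : 2 ≤ t) (hx : 1 ≤ x)
    (hL : 2 * t - 1 ≤ x ^ 2)
    (hU : x ^ 2 ≤ 2 * t - 1 + 2 * (1 / (1 + Real.sqrt 3)) * Real.sqrt (2 * t - 1)) :
    (x + 1 / x) ^ 2 ≤ 2 * (t + 1) - 1
      + 2 * (1 / (1 + Real.sqrt 3)) * Real.sqrt (2 * (t + 1) - 1) := by
  have s3sq : Real.sqrt 3 ^ 2 = 3 := Real.sq_sqrt (by norm_num)
  have s3ge : (1:ℝ) ≤ Real.sqrt 3 := by nlinarith [Real.sqrt_nonneg 3]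
  set c := 1 / (1 + Real.sqrt 3) with hc
  have hcpos : 0 < c := by positivity
  have hcc : c * (1 + Real.sqrt 3) = 1 := by rw [hc]; field_simp
  have h4c : 4 * c = 2 * (Real.sqrt 3 - 1) := by
    rw [hc, mul_one_div, div_eq_iff (by positivity : (1:ℝ) + Real.sqrt 3 ≠ 0)]
    linear_combination (-2) * s3sq
  clear_value c
  clear hc
  have hA : (0:ℝ) < 2 * t - 1 := by linarith
  have hB : (0:ℝ) < 2 * (t + 1) - 1 := by linarith
  set a := Real.sqrt (2 * t - 1) with ha
  set b := Real.sqrt (2 * (t + 1) - 1) with hb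
  have hann : (0:ℝ) ≤ a := Real.sqrt_nonneg _
  have hasq : a ^ 2 = 2 * t - 1 := Real.sq_sqrt hA.le
  have hbsq : b ^ 2 = 2 * (t + 1) - 1 := Real.sq_sqrt hB.le
  have hage : Real.sqrt 3 ≤ a := by rw [ha]; exact Real.sqrt_le_sqrt (by linarith)
  have hapos : (0:ℝ) < a := lt_of_lt_of_le (by linarith) hage
  have hbnn : (0:ℝ) ≤ b := Real.sqrt_nonneg _
  have hab : a ≤ b := by rw [ha, hb]; exact Real.sqrt_le_sqrt (by linarith)
  clear_value a b
  clear ha hb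
  have hxpos : (0:ℝ) < x := by linarith
  have hkey : (x + 1 / x) ^ 2 = x ^ 2 + 2 + (1 / x) ^ 2 := by field_simp; ring
  have hinv : (1 / x) ^ 2 ≤ 1 / (2 * t - 1) := by
    rw [div_pow, one_pow]
    exact one_div_le_one_div_of_le hA hL
  have hdiff : (b - a) * (b + a) = 2 := by linear_combination hbsq - hasq
  have hule : 1 / a ≤ a / 3 := by
    rw [div_le_div_iff₀ hapos (by norm_num)]
    nlinarith [hasq]
  have hble : b ≤ a + 1 / a := by
    have h1 : b ^ 2 ≤ (a + 1 / a) ^ 2 := by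
      have he : (a + 1 / a) ^ 2 = a ^ 2 + 2 + (1 / a) ^ 2 := by field_simp; ring
      nlinarith [sq_nonneg (1 / a)]
    calc b = Real.sqrt (b ^ 2) := (Real.sqrt_sq hbnn).symm
      _ ≤ Real.sqrt ((a + 1 / a) ^ 2) := Real.sqrt_le_sqrt h1
      _ = a + 1 / a := Real.sqrt_sq (add_pos hapos (one_div_pos.mpr hapos)).le
  have hs : a + b ≤ 7 / 3 * a := by linarith
  have h2 : Real.sqrt 3 ≤ 11 / 6 := by nlinarith [sq_nonneg (Real.sqrt 3 - 11 / 6)]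
  have h3 : 7 / 3 * a ≤ 2 * (Real.sqrt 3 - 1) * a ^ 2 := by
    nlinarith [mul_le_mul_of_nonneg_left (mul_le_mul_of_nonneg_right hage hapos.le)
        (by linarith : (0:ℝ) ≤ 2 * (Real.sqrt 3 - 1)),
      mul_nonneg (by linarith : (0:ℝ) ≤ 11 / 3 - 2 * Real.sqrt 3) hapos.le, s3sq]
  have h5 : 2 * (Real.sqrt 3 - 1) * a ^ 2 = 4 * c * a ^ 2 := by linear_combination (-a ^ 2) * h4c
  have hfin : a + b ≤ 4 * c * a ^ 2 := by linarith
  have h2cdA : 2 * c * (b - a) * a ^ 2 * (a + b) = 4 * c * a ^ 2 := by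
    linear_combination (2 * c * a ^ 2) * hdiff
  have hspos : (0:ℝ) < a + b := by linarith
  have hgap' : 1 ≤ 2 * c * (b - a) * a ^ 2 :=
    le_of_mul_le_mul_right (by rw [h2cdA, one_mul]; exact hfin) hspos
  have hgap : 1 / (2 * t - 1) ≤ 2 * c * (b - a) := by
    rw [div_le_iff₀ hA, ← hasq]
    linarith [hgap']
  rw [hkey]
  linarith [hU, hinv, hgap]

/-- Growth estimates for the recursive projection-parameter sequence
`β₀ = 1`, `β_{t+1} = ∑_{k ≤ t} 1/β_k` (Lemma 3 in Nesterov's paper):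
`√(t-1) ≤ β_t ≤ 1/(1+√3) + √(2t-1)` for all `t ≥ 1`; in particular the sequence is
non-decreasing and `β_T / T → 0`. -/
theorem beta_sequence_bounds (beta : ℕ → ℝ)
    (h0 : beta 0 = 1)
    (hrec : ∀ t : ℕ, beta (t + 1) = ∑ k ∈ Finset.range (t + 1), 1 / beta k) :
    (∀ t : ℕ, 1 ≤ t →
      Real.sqrt ((t : ℝ) - 1) ≤ beta t ∧
      beta t ≤ 1 / (1 + Real.sqrt 3) + Real.sqrt (2 * (t : ℝ) - 1)) ∧
    Monotone beta ∧
    Filter.Tendsto (fun T : ℕ => beta T / T) Filter.atTop (nhds 0) := by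
  have s3sq : Real.sqrt 3 ^ 2 = 3 := Real.sq_sqrt (by norm_num)
  have s3ge : (1:ℝ) ≤ Real.sqrt 3 := by nlinarith [Real.sqrt_nonneg 3]
  set c : ℝ := 1 / (1 + Real.sqrt 3) with hc
  have hcpos : 0 < c := by positivity
  -- positivity
  have hpos : ∀ t, 0 < beta t := by
    intro t
    induction t using Nat.strong_induction_on with
    | _ t ih =>
      match t with
      | 0 => rw [h0]; norm_num
      | t + 1 =>
        rw [hrec]
        refine Finset.sum_pos (fun k hk => ?_) ⟨0, Finset.mem_range.mpr (Nat.succ_pos t)⟩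
        exact div_pos one_pos (ih k (Finset.mem_range.mp hk))
  have h1 : beta 1 = 1 := by rw [hrec]; simp [h0]
  have hstep : ∀ s : ℕ, beta (s + 2) = beta (s + 1) + 1 / beta (s + 1) := by
    intro s
    rw [show s + 2 = (s + 1) + 1 from rfl, hrec (s + 1), Finset.sum_range_succ, ← hrec s]
  have hge1 : ∀ t, 1 ≤ beta t := by
    intro t
    induction t with
    | zero => rw [h0]
    | succ n ih =>
      match n, ih with
      | 0, _ => rw [h1]
      | n + 1, ih =>
        rw [hstep n]
        have h2 : 0 < 1 / beta (n + 1) := one_div_pos.mpr (hpos (n + 1))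
        linarith
  -- squared lower bound
  have hLsq : ∀ t : ℕ, 1 ≤ t → (2 * (t : ℝ) - 1) ≤ (beta t) ^ 2 := by
    intro t ht
    induction t with
    | zero => omega
    | succ n ih =>
      match n, ih with
      | 0, _ => rw [h1]; norm_num
      | n + 1, ih =>
        have ih' := ih (by omega)
        rw [hstep n]
        have hb := hge1 (n + 1)
        have hbpos : (0:ℝ) < beta (n + 1) := hpos (n + 1)
        have key : (beta (n+1) + 1 / beta (n+1)) ^ 2 =
            beta (n+1) ^ 2 + 2 + (1 / beta (n+1)) ^ 2 := by
          field_simp; ring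
        push_cast
        push_cast at ih'
        nlinarith [sq_nonneg (1 / beta (n+1))]
  -- squared upper bound, t ≥ 2
  have hUsq : ∀ t : ℕ, 2 ≤ t →
      (beta t) ^ 2 ≤ 2 * (t : ℝ) - 1 + 2 * c * Real.sqrt (2 * (t : ℝ) - 1) := by
    intro t ht
    induction t with
    | zero => omega
    | succ n ih =>
      match n, ih with
      | 0, _ => omega
      | 1, _ =>
        have hb2 : beta 2 = 2 := by rw [hstep 0, h1]; norm_num
        rw [hb2]
        have hsq3 : Real.sqrt (2 * ((2:ℕ) : ℝ) - 1) = Real.sqrt 3 := by norm_num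
        rw [hsq3]
        have hcc : c * (1 + Real.sqrt 3) = 1 := by rw [hc]; field_simp
        push_cast
        nlinarith [hcc, mul_nonneg hcpos.le (by linarith : (0:ℝ) ≤ Real.sqrt 3 - 1)]
      | n + 2, ih =>
        have ih' := ih (by omega)
        have ihL := hLsq (n + 2) (by omega)
        have hb3 : beta (n + 3) = beta (n + 2) + 1 / beta (n + 2) := hstep (n + 1)
        have ht2 : (2:ℝ) ≤ ((n + 2 : ℕ) : ℝ) := by exact_mod_cast Nat.le_add_left 2 n
        have := nesterov_aux_step ((n + 2 : ℕ) : ℝ) (beta (n + 2)) ht2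
          (hge1 (n + 2)) ihL ih'
        have hcast : ((n + 2 : ℕ) : ℝ) + 1 = ((n + 3 : ℕ) : ℝ) := by push_cast; ring
        rw [hcast] at this
        rw [show n + 2 + 1 = n + 3 from rfl, hb3]
        exact this
  -- final pointwise bounds
  have hbounds : ∀ t : ℕ, 1 ≤ t →
      Real.sqrt ((t : ℝ) - 1) ≤ beta t ∧
      beta t ≤ c + Real.sqrt (2 * (t : ℝ) - 1) := by
    intro t ht
    have hbpos := hpos t
    have hL := hLsq t ht
    constructor
    · calc Real.sqrt ((t:ℝ) - 1) ≤ Real.sqrt ((beta t) ^ 2) := by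
            apply Real.sqrt_le_sqrt
            have h1t : (1:ℝ) ≤ (t:ℝ) := by exact_mod_cast ht
            nlinarith
        _ = beta t := Real.sqrt_sq hbpos.le
    · rcases eq_or_lt_of_le ht with h | h
      · -- t = 1
        subst h
        rw [h1]
        have hsq1 : Real.sqrt (2 * ((1:ℕ) : ℝ) - 1) = 1 := by norm_num
        rw [hsq1]
        linarith [hcpos]
      · have ht2 : 2 ≤ t := h
        have hU := hUsq t ht2
        have hs := Real.sqrt_nonneg (2 * (t:ℝ) - 1)
        have hssq : Real.sqrt (2 * (t:ℝ) - 1) ^ 2 = 2 * (t:ℝ) - 1 := by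
          apply Real.sq_sqrt
          have h2t : (2:ℝ) ≤ (t:ℝ) := by exact_mod_cast ht2
          nlinarith
        nlinarith [hU, hcpos, hbpos]
  refine ⟨hbounds, ?_, ?_⟩
  · apply monotone_nat_of_le_succ
    intro n
    match n with
    | 0 => rw [h0, h1]
    | n + 1 =>
      rw [hstep n]
      have h2 : 0 < 1 / beta (n + 1) := one_div_pos.mpr (hpos (n + 1))
      linarith
  · apply squeeze_zero (g := fun T : ℕ => (c + Real.sqrt (2 * (T:ℝ))) / T)
    · intro T
      exact div_nonneg (hpos T).le (Nat.cast_nonneg T)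
    · intro T
      match T with
      | 0 => simp
      | T + 1 =>
        have hT1 : (0:ℝ) < ((T + 1 : ℕ) : ℝ) := by exact_mod_cast Nat.succ_pos T
        gcongr
        have hub := (hbounds (T + 1) (Nat.le_add_left 1 T)).2
        have hmono : Real.sqrt (2 * ((T + 1 : ℕ) : ℝ) - 1) ≤
            Real.sqrt (2 * ((T + 1 : ℕ) : ℝ)) := Real.sqrt_le_sqrt (by linarith)
        linarith
    · have heq : (fun T : ℕ => (c + Real.sqrt (2 * (T:ℝ))) / T)
          = fun T : ℕ => c / T + Real.sqrt 2 / Real.sqrt T := by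
        funext T
        match T with
        | 0 => simp
        | T + 1 =>
          have hT1 : (0:ℝ) < ((T + 1 : ℕ) : ℝ) := by exact_mod_cast Nat.succ_pos T
          have h2T : Real.sqrt (2 * ((T + 1 : ℕ) : ℝ))
              = Real.sqrt 2 * Real.sqrt ((T + 1 : ℕ) : ℝ) := Real.sqrt_mul (by norm_num) _
          have hTsq : Real.sqrt ((T + 1 : ℕ) : ℝ) * Real.sqrt ((T + 1 : ℕ) : ℝ)
              = ((T + 1 : ℕ) : ℝ) := Real.mul_self_sqrt hT1.le
          have hTpos : (0:ℝ) < Real.sqrt ((T + 1 : ℕ) : ℝ) := Real.sqrt_pos.mpr hT1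
          rw [h2T]
          push_cast at hTsq ⊢
          field_simp
          linear_combination (Real.sqrt 2) * hTsq
      rw [heq]
      have t1 : Filter.Tendsto (fun T : ℕ => c / T) Filter.atTop (nhds 0) :=
        tendsto_const_div_atTop_nhds_zero_nat c
      have t2 : Filter.Tendsto (fun T : ℕ => Real.sqrt 2 / Real.sqrt T)
          Filter.atTop (nhds 0) := by
        apply Filter.Tendsto.div_atTop tendsto_const_nhds
        apply Filter.tendsto_atTop_atTop.mpr
        intro b
        refine ⟨⌈b ^ 2⌉₊, fun T hT => ?_⟩
        rcases le_total b 0 with hb | hb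
        · exact hb.trans (Real.sqrt_nonneg _)
        · calc b = Real.sqrt (b ^ 2) := (Real.sqrt_sq hb).symm
            _ ≤ Real.sqrt T := Real.sqrt_le_sqrt
                ((Nat.le_ceil _).trans (by exact_mod_cast hT))
      simpa using t1.add t2
end

section
/- For the Hedge algorithm with γ = 1/(√(2ln(n)/T) + 1) and score function U(z) = γ^{(z+μ)/(μ+ρ)} applied to losses ℓ_{t,i} ∈ [-μ, ρ], the averaged regret satisfies (1/T)·(Σ_{t<T} ⟨ℓ_t, x_t⟩ - min_{1≤i≤n} Σ_{t<T} ℓ_{t,i}) ≤ (μ+ρ)·(ln(n)/T + √(2ln(n)/T)). -/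
set_option maxHeartbeats 1000000

/-- Averaged-regret bound for the Hedge algorithm with Freund–Schapire's optimized
parameter `γ = 1/(√(2 ln n / T) + 1)` and score function `U(z) = γ^{(z+μ)/(μ+ρ)}`:
`(1/T)(∑_t ⟨ℓ_t,x_t⟩ - min_i ∑_t ℓ_{t,i}) ≤ (μ+ρ)(ln n/T + √(2 ln n/T))`. -/
theorem hedge_optimized_gamma_regret (n : ℕ) (hn : 2 ≤ n) (T : ℕ) (hT : 1 ≤ T)
    (mu rho : ℝ) (hmurho : 0 < mu + rho)
    (gamma : ℝ) (hgamma : gamma = 1 / (Real.sqrt (2 * Real.log n / T) + 1))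
    (ℓ : ℕ → Fin n → ℝ)
    (hℓ : ∀ t, ∀ i, -mu ≤ ℓ t i ∧ ℓ t i ≤ rho)
    (w : ℕ → Fin n → ℝ)
    (hw0 : ∀ i, w 0 i = 1 / n)
    (hwrec : ∀ t i, w (t + 1) i = w t i * gamma ^ ((ℓ t i + mu) / (mu + rho)))
    (x : ℕ → Fin n → ℝ)
    (hx : ∀ t i, x t i = w t i / ∑ j, w t j)
    (huniv : (Finset.univ : Finset (Fin n)).Nonempty) :
    (1 / (T : ℝ)) * ((∑ t ∈ Finset.range T, ∑ i, ℓ t i * x t i) -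
        (Finset.univ.inf' huniv fun i => ∑ t ∈ Finset.range T, ℓ t i)) ≤
      (mu + rho) * (Real.log n / T + Real.sqrt (2 * Real.log n / T)) := by
  have hT0 : (0:ℝ) < T := by exact_mod_cast hT
  have hn1 : (1:ℝ) < n := by exact_mod_cast lt_of_lt_of_le one_lt_two (by exact_mod_cast hn)
  have hn0 : (n:ℝ) ≠ 0 := by positivity
  have hL : 0 < Real.log n := Real.log_pos hn1
  set L := Real.log n with hLdef
  set δ := Real.sqrt (2 * L / T) with hδdef
  have hδpos : 0 < δ := Real.sqrt_pos.mpr (by positivity)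
  have hδsq : δ * δ = 2 * L / T := Real.mul_self_sqrt (by positivity)
  have hγval : gamma = 1 / (δ + 1) := hgamma
  have hγpos : 0 < gamma := by rw [hγval]; positivity
  have hγlt1 : gamma < 1 := by rw [hγval, div_lt_one (by linarith)]; linarith
  -- normalized losses
  set z : ℕ → Fin n → ℝ := fun t i => (ℓ t i + mu) / (mu + rho) with hzdef
  have hz0 : ∀ t i, 0 ≤ z t i := fun t i => div_nonneg (by linarith [(hℓ t i).1]) hmurho.le
  have hz1 : ∀ t i, z t i ≤ 1 := fun t i => (div_le_one hmurho).mpr (by linarith [(hℓ t i).2])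
  have hℓz : ∀ t i, ℓ t i = (mu + rho) * z t i - mu := by
    intro t i; simp only [hzdef]; field_simp; ring
  have hze : ∀ t i, gamma ^ ((ℓ t i + mu) / (mu + rho)) = gamma ^ (z t i) := fun _ _ => rfl
  set W : ℕ → ℝ := fun t => ∑ i, w t i with hWdef
  have hwpos : ∀ t i, 0 < w t i := by
    intro t
    induction t with
    | zero => intro i; rw [hw0]; positivity
    | succ t ih => intro i; rw [hwrec]; exact mul_pos (ih i) (Real.rpow_pos_of_pos hγpos _)
  have hWpos : ∀ t, 0 < W t := fun t => Finset.sum_pos (fun i _ => hwpos t i) huniv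
  set q : ℕ → ℝ := fun t => ∑ i, z t i * x t i with hqdef
  -- convexity: γ^z ≤ 1 - (1-γ)z
  have key : ∀ t i, gamma ^ (z t i) ≤ 1 - (1 - gamma) * z t i := by
    intro t i
    have hc := convexOn_exp.2 (Set.mem_univ (0:ℝ)) (Set.mem_univ (Real.log gamma))
      (show (0:ℝ) ≤ 1 - z t i by linarith [hz1 t i]) (hz0 t i)
      (show 1 - z t i + z t i = 1 by ring)
    simp only [smul_eq_mul, mul_zero, zero_add, Real.exp_zero, Real.exp_log hγpos] at hc
    rw [Real.rpow_def_of_pos hγpos]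
    calc Real.exp (Real.log gamma * z t i) = Real.exp (z t i * Real.log gamma) := by ring_nf
      _ ≤ (1 - z t i) * 1 + z t i * gamma := hc
      _ = 1 - (1 - gamma) * z t i := by ring
  -- step bound
  have stepW : ∀ t, W (t + 1) ≤ W t * Real.exp (-((1 - gamma) * q t)) := by
    intro t
    have hWne : W t ≠ 0 := (hWpos t).ne'
    have hqW : W t * q t = ∑ i, w t i * z t i := by
      simp only [hqdef, hx, Finset.mul_sum]
      refine Finset.sum_congr rfl fun i _ => ?_
      rw [div_eq_mul_inv]
      field_simp
      show W t * z t i * w t i * (W t)⁻¹ = z t i * w t i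
      field_simp
    have h1 : W (t + 1) ≤ W t * (1 - (1 - gamma) * q t) := by
      have e : W (t + 1) = ∑ i, w t i * gamma ^ (z t i) := by
        simp only [hWdef]
        exact Finset.sum_congr rfl fun i _ => by rw [hwrec, hze]
      have e2 : W t * (1 - (1 - gamma) * q t) = ∑ i, w t i * (1 - (1 - gamma) * z t i) := by
        have e3 : ∑ i, w t i * (1 - (1 - gamma) * z t i)
            = W t - (1 - gamma) * (W t * q t) := by
          rw [hqW, Finset.mul_sum, ← Finset.sum_sub_distrib]
          exact Finset.sum_congr rfl fun i _ => by ring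
        rw [e3]; ring
      rw [e, e2]
      exact Finset.sum_le_sum fun i _ => mul_le_mul_of_nonneg_left (key t i) (hwpos t i).le
    refine h1.trans (mul_le_mul_of_nonneg_left ?_ (hWpos t).le)
    have := Real.add_one_le_exp (-((1 - gamma) * q t))
    linarith
  -- potential bound
  have hWT : ∀ m, W m ≤ Real.exp (-((1 - gamma) * ∑ t ∈ Finset.range m, q t)) := by
    intro m
    induction m with
    | zero =>
      simp only [Finset.sum_range_zero, mul_zero, neg_zero, Real.exp_zero]
      have : W 0 = ∑ _i : Fin n, (1:ℝ)/n :=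
        Finset.sum_congr rfl fun i _ => hw0 i
      rw [this, Finset.sum_const, Finset.card_univ, Fintype.card_fin, nsmul_eq_mul]
      rw [mul_one_div, div_self hn0]
    | succ m ih =>
      calc W (m+1) ≤ W m * Real.exp (-((1 - gamma) * q m)) := stepW m
        _ ≤ Real.exp (-((1 - gamma) * ∑ t ∈ Finset.range m, q t))
              * Real.exp (-((1 - gamma) * q m)) :=
            mul_le_mul_of_nonneg_right ih (Real.exp_pos _).le
        _ = Real.exp (-((1 - gamma) * ∑ t ∈ Finset.range (m+1), q t)) := by
            rw [← Real.exp_add, Finset.sum_range_succ]; ring_nf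
  -- per-expert weight formula
  have hwT : ∀ m i, w m i = (1/n) * gamma ^ (∑ s ∈ Finset.range m, z s i) := by
    intro m i
    induction m with
    | zero => simp [hw0]
    | succ m ih =>
      rw [hwrec, hze, ih, Finset.sum_range_succ, Real.rpow_add hγpos]; ring
  -- the minimizer
  obtain ⟨i0, -, hi0⟩ := Finset.exists_mem_eq_inf' huniv (fun i => ∑ t ∈ Finset.range T, ℓ t i)
  set Z : ℝ := ∑ t ∈ Finset.range T, z t i0 with hZdef
  have hZ0 : 0 ≤ Z := Finset.sum_nonneg fun t _ => hz0 t i0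
  have hZT : Z ≤ T := by
    calc Z ≤ ∑ t ∈ Finset.range T, (1:ℝ) := Finset.sum_le_sum fun t _ => hz1 t i0
      _ = T := by simp
  set S : ℝ := ∑ t ∈ Finset.range T, q t with hSdef
  -- combine: (1-γ) S ≤ L + Z * (-log γ)
  have hmain : (1 - gamma) * S ≤ L + Z * (-Real.log gamma) := by
    have hlow : (1/n : ℝ) * gamma ^ Z ≤ W T := by
      rw [← hwT T i0]
      exact Finset.single_le_sum (fun i _ => (hwpos T i).le) (Finset.mem_univ i0)
    have h2 : (1/n : ℝ) * gamma ^ Z ≤ Real.exp (-((1 - gamma) * S)) := hlow.trans (hWT T)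
    have h3 := Real.log_le_log (by positivity) h2
    rw [Real.log_mul (by positivity) (Real.rpow_pos_of_pos hγpos _).ne',
      Real.log_rpow hγpos, Real.log_exp, one_div, Real.log_inv] at h3
    linarith
  -- log(1/γ) ≤ (1/γ - γ)/2
  have hu : -Real.log gamma ≤ ((δ + 1) - gamma) / 2 := by
    have h1 : Real.log (δ + 1) < Real.sinh (Real.log (δ + 1)) :=
      Real.self_lt_sinh_iff.mpr (Real.log_pos (by linarith))
    rw [Real.sinh_eq, Real.exp_log (by linarith), ← Real.log_inv,
      Real.exp_log (by positivity)] at h1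
    have : -Real.log gamma = Real.log (δ + 1) := by
      rw [hγval, one_div, Real.log_inv, neg_neg]
    rw [this]
    have hγinv : (δ + 1)⁻¹ = gamma := by rw [hγval, one_div]
    rw [hγinv] at h1
    linarith
  -- main regret bound in z-units : S - Z ≤ L + T * δ
  have hreg : S - Z ≤ L + T * δ := by
    have hγd : gamma * (δ + 1) = 1 := by
      rw [hγval]; field_simp
    have h1g : 0 < 1 - gamma := by linarith
    have hc2 : -Real.log gamma - (1 - gamma) ≤ (1 - gamma)^2 / (2 * gamma) := by
      rw [le_div_iff₀ (by positivity : (0:ℝ) < 2 * gamma)]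
      nlinarith [mul_le_mul_of_nonneg_right hu (by positivity : (0:ℝ) ≤ 2 * gamma), hγd]
    have hZc : Z * (-Real.log gamma - (1 - gamma)) ≤ T * ((1 - gamma)^2 / (2 * gamma)) := by
      calc Z * (-Real.log gamma - (1 - gamma)) ≤ Z * ((1 - gamma)^2 / (2 * gamma)) :=
            mul_le_mul_of_nonneg_left hc2 hZ0
        _ ≤ T * ((1 - gamma)^2 / (2 * gamma)) :=
            mul_le_mul_of_nonneg_right hZT (by positivity)
    have h4 : (S - Z) * (1 - gamma) ≤ L + T * ((1 - gamma)^2 / (2 * gamma)) := by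
      nlinarith [hmain, hZc]
    have hTδ : (T:ℝ) * (δ * δ) = 2 * L := by
      rw [hδsq]; field_simp
    have h1γ : 1 - gamma = δ * gamma := by
      rw [hγval]; field_simp; ring
    have h5 : L + T * ((1 - gamma)^2 / (2 * gamma)) = (L + T * δ) * (1 - gamma) := by
      rw [h1γ]
      have e1 : (T:ℝ) * ((δ * gamma)^2 / (2 * gamma)) = L * gamma := by
        rw [show (δ * gamma)^2 / (2 * gamma) = δ^2 * gamma / 2 by rw [div_eq_iff (by positivity)]; ring]
        linear_combination gamma / 2 * hTδ
      rw [e1]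
      linear_combination (-gamma) * hTδ + L * h1γ
    rw [h5] at h4
    exact le_of_mul_le_mul_right h4 h1g
  -- translate back to losses
  have hx1 : ∀ t, ∑ i, x t i = 1 := by
    intro t
    simp only [hx]
    rw [← Finset.sum_div, div_self (hWpos t).ne']
  have hlossW : ∀ t, ∑ i, ℓ t i * x t i = (mu + rho) * q t - mu := by
    intro t
    have : ∑ i, ℓ t i * x t i = ∑ i, ((mu + rho) * (z t i * x t i) - mu * x t i) :=
      Finset.sum_congr rfl fun i _ => by rw [hℓz t i]; ring
    rw [this, Finset.sum_sub_distrib, ← Finset.mul_sum, ← Finset.mul_sum, hx1]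
    simp [hqdef]
  have hsum1 : ∑ t ∈ Finset.range T, ∑ i, ℓ t i * x t i = (mu + rho) * S - mu * T := by
    calc ∑ t ∈ Finset.range T, ∑ i, ℓ t i * x t i
        = ∑ t ∈ Finset.range T, ((mu + rho) * q t - mu) :=
          Finset.sum_congr rfl fun t _ => hlossW t
      _ = (mu + rho) * S - mu * T := by
          rw [Finset.sum_sub_distrib, ← Finset.mul_sum, Finset.sum_const, Finset.card_range,
            nsmul_eq_mul]
          ring
  have hsum2 : (Finset.univ.inf' huniv fun i => ∑ t ∈ Finset.range T, ℓ t i)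
      = (mu + rho) * Z - mu * T := by
    rw [hi0]
    calc ∑ t ∈ Finset.range T, ℓ t i0
        = ∑ t ∈ Finset.range T, ((mu + rho) * z t i0 - mu) :=
          Finset.sum_congr rfl fun t _ => hℓz t i0
      _ = (mu + rho) * Z - mu * T := by
          rw [Finset.sum_sub_distrib, ← Finset.mul_sum, Finset.sum_const, Finset.card_range,
            nsmul_eq_mul]
          ring
  rw [hsum1, hsum2]
  have e : (mu + rho) * S - mu * T - ((mu + rho) * Z - mu * T) = (mu + rho) * (S - Z) := by ring
  rw [e]
  calc (1 / (T:ℝ)) * ((mu + rho) * (S - Z)) ≤ (1 / (T:ℝ)) * ((mu + rho) * (L + T * δ)) := by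
        apply mul_le_mul_of_nonneg_left (mul_le_mul_of_nonneg_left hreg hmurho.le) (by positivity)
    _ = (mu + rho) * (L / T + δ) := by
        have hTδdiv : L / (T:ℝ) + δ = (1 / (T:ℝ)) * (L + T * δ) := by
          field_simp
        rw [hTδdiv]; ring
end
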